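/- Let (V,d) be a finite pseudometric space, let α > 0, ρ ≥ 0, and u ∈ V. Let (r_v)_{v ∈ V} be independent random variables, each exponentially distributed with rate α. Then with probability at least e^{−2ρα} there exists v* ∈ V such that for every x ∈ V with d(u,x) ≤ ρ, the point v* is the unique minimizer over v ∈ V of d(x,v) − r_v. In other words, with probability at least e^{−2ρα} the entire closed ball of radius ρ around u is contained in a single cluster of the shifted-distance clustering that assigns each x to the minimizer of d(x,v) − r_v. -/

import Mathlib

open MeasureTheory ProbabilityTheory
open scoped ENNReal

section Aux

open Real Set

/-- Tail of the exponential distribution. -/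
lemma expMeasure_Ioi_eq {α : ℝ} (hα : 0 < α) (t : ℝ) :
    expMeasure α (Set.Ioi t) = ENNReal.ofReal (Real.exp (-(α * max t 0))) := by
  haveI := isProbabilityMeasure_expMeasure hα
  have hIic : expMeasure α (Set.Iic t)
      = ENNReal.ofReal (if 0 ≤ t then 1 - Real.exp (-(α * t)) else 0) := by
    rw [expMeasure, gammaMeasure, withDensity_apply _ measurableSet_Iic]
    exact lintegral_exponentialPDF_eq_antiDeriv hα t
  have hcompl : Set.Ioi t = (Set.Iic t)ᶜ := Set.compl_Iic.symm
  rw [hcompl, measure_compl measurableSet_Iic (measure_ne_top _ _), measure_univ, hIic]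
  split_ifs with h
  · have hexp : Real.exp (-(α * t)) ≤ 1 :=
      Real.exp_le_one_iff.mpr (by nlinarith)
    rw [max_eq_left h, ← ENNReal.ofReal_one,
      ← ENNReal.ofReal_sub _ (by linarith : (0:ℝ) ≤ 1 - Real.exp (-(α * t)))]
    congr 1
    ring
  · have hm : max t 0 = 0 := max_eq_right (le_of_not_ge h)
    rw [hm]
    simp

lemma expMeasure_singleton {α : ℝ} (x : ℝ) : expMeasure α {x} = 0 := by
  rw [expMeasure, gammaMeasure, withDensity_apply _ (measurableSet_singleton x)]
  exact setLIntegral_measure_zero _ _ (measure_singleton x)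

/-- Probability that an exponential variable beats an independent variable by margin `s`. -/
lemma measure_shift_lt {Ω : Type*} [MeasurableSpace Ω] (μ : Measure Ω)
    [IsProbabilityMeasure μ] {α : ℝ} (hα : 0 < α)
    {X T : Ω → ℝ} (hX : Measurable X) (hT : Measurable T)
    (hind : IndepFun T X μ) (hXd : Measure.map X μ = expMeasure α) (s : ℝ) :
    μ {ω | T ω + s < X ω}
      = ∫⁻ t, ENNReal.ofReal (Real.exp (-(α * max (t + s) 0))) ∂(Measure.map T μ) := by
  haveI := isProbabilityMeasure_expMeasure hα
  have hmap : Measure.map (fun ω => (T ω, X ω)) μ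
      = (Measure.map T μ).prod (Measure.map X μ) :=
    (indepFun_iff_map_prod_eq_prod_map_map hT.aemeasurable hX.aemeasurable).mp hind
  have hS : MeasurableSet {p : ℝ × ℝ | p.1 + s < p.2} :=
    measurableSet_lt (measurable_fst.add_const s) measurable_snd
  have h1 : μ {ω | T ω + s < X ω}
      = Measure.map (fun ω => (T ω, X ω)) μ {p : ℝ × ℝ | p.1 + s < p.2} := by
    rw [Measure.map_apply (hT.prodMk hX) hS]
    rfl
  rw [h1, hmap, hXd, Measure.prod_apply hS]
  refine lintegral_congr fun t => ?_
  have : (Prod.mk t ⁻¹' {p : ℝ × ℝ | p.1 + s < p.2}) = Set.Ioi (t + s) := rfl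
  rw [this, expMeasure_Ioi_eq hα]

/-- Two independent exponentials differ by a fixed constant with probability zero. -/
lemma measure_eq_shift_zero {Ω : Type*} [MeasurableSpace Ω] (μ : Measure Ω)
    [IsProbabilityMeasure μ] {α : ℝ} (hα : 0 < α)
    {X T : Ω → ℝ} (hX : Measurable X) (hT : Measurable T)
    (hind : IndepFun T X μ) (hXd : Measure.map X μ = expMeasure α) (c : ℝ) :
    μ {ω | X ω = T ω + c} = 0 := by
  haveI := isProbabilityMeasure_expMeasure hα
  have hmap : Measure.map (fun ω => (T ω, X ω)) μ
      = (Measure.map T μ).prod (Measure.map X μ) :=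
    (indepFun_iff_map_prod_eq_prod_map_map hT.aemeasurable hX.aemeasurable).mp hind
  have hS : MeasurableSet {p : ℝ × ℝ | p.2 = p.1 + c} :=
    measurableSet_eq_fun measurable_snd (measurable_fst.add_const c)
  have h1 : μ {ω | X ω = T ω + c}
      = Measure.map (fun ω => (T ω, X ω)) μ {p : ℝ × ℝ | p.2 = p.1 + c} := by
    rw [Measure.map_apply (hT.prodMk hX) hS]
    rfl
  rw [h1, hmap, hXd, Measure.prod_apply hS]
  have : ∀ t : ℝ, expMeasure α (Prod.mk t ⁻¹' {p : ℝ × ℝ | p.2 = p.1 + c}) = 0 := by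
    intro t
    have : (Prod.mk t ⁻¹' {p : ℝ × ℝ | p.2 = p.1 + c}) = {t + c} := by
      ext x; simp [Set.mem_singleton_iff, eq_comm]
    rw [this, expMeasure_singleton]
  simp only [this, lintegral_zero]

end Aux

/-- **padding property of LDD(α).** In a finite pseudometric space, with
independent `Exp(α)` shifts `r_v`, with probability at least `e^{−2ρα}` there is a single
`v*` that is the unique minimizer of `v ↦ d(x,v) − r_v` simultaneously for every `x` in the
closed ball of radius `ρ` around `u`; i.e., the whole ball lies in the cluster of `v*`. -/
theorem ldd_padding_property
    {V : Type*} [Fintype V] [PseudoMetricSpace V]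
    {Ω : Type*} [MeasurableSpace Ω] (μ : Measure Ω) [IsProbabilityMeasure μ]
    (α : ℝ) (hα : 0 < α) (ρ : ℝ) (hρ : 0 ≤ ρ) (u : V)
    (r : V → Ω → ℝ)
    (hmeas : ∀ v, Measurable (r v))
    (hindep : iIndepFun r μ)
    (hdist : ∀ v, Measure.map (r v) μ = expMeasure α) :
    ENNReal.ofReal (Real.exp (-2 * ρ * α)) ≤
      μ {ω | ∃ vstar : V, ∀ x : V, dist u x ≤ ρ →
        ∀ v : V, v ≠ vstar → dist x vstar - r vstar ω < dist x v - r v ω} := by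
  classical
  set c : ℝ≥0∞ := ENNReal.ofReal (Real.exp (-2 * ρ * α)) with hc
  -- the "win by margin s" events
  set A : V → Set Ω := fun v =>
    {ω | ∀ w, w ≠ v → r w ω - dist u w + 2 * ρ < r v ω - dist u v} with hA
  set B : V → Set Ω := fun v =>
    {ω | ∀ w, w ≠ v → r w ω - dist u w < r v ω - dist u v} with hB
  have hAmeas : ∀ v, MeasurableSet (A v) := by
    intro v
    have : A v = ⋂ w, ⋂ (_ : w ≠ v),
        {ω | r w ω - dist u w + 2 * ρ < r v ω - dist u v} := by
      ext ω; simp [hA, Set.mem_iInter]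
    rw [this]
    exact MeasurableSet.iInter fun w => MeasurableSet.iInter fun _ =>
      measurableSet_lt (((hmeas w).sub measurable_const).add measurable_const)
        ((hmeas v).sub measurable_const)
  have hBmeas : ∀ v, MeasurableSet (B v) := by
    intro v
    have : B v = ⋂ w, ⋂ (_ : w ≠ v),
        {ω | r w ω - dist u w < r v ω - dist u v} := by
      ext ω; simp [hB, Set.mem_iInter]
    rw [this]
    exact MeasurableSet.iInter fun w => MeasurableSet.iInter fun _ =>
      measurableSet_lt ((hmeas w).sub measurable_const)
        ((hmeas v).sub measurable_const)
  have hAdisj : Pairwise (Function.onFun Disjoint A) := by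
    intro v w hvw
    refine Set.disjoint_left.mpr fun ω hv hw => ?_
    have h1 := hv w (Ne.symm hvw)
    have h2 := hw v hvw
    linarith
  have hBdisj : Pairwise (Function.onFun Disjoint B) := by
    intro v w hvw
    refine Set.disjoint_left.mpr fun ω hv hw => ?_
    have h1 := hv w (Ne.symm hvw)
    have h2 := hw v hvw
    linarith
  -- Key inequality: μ (A v) ≥ c * μ (B v)
  have hkey : ∀ v : V, c * μ (B v) ≤ μ (A v) := by
    intro v
    by_cases hS : (Finset.univ.erase v).Nonempty
    · -- T = max over w ≠ v of r w - d(u,w) + d(u,v)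
      set S : Finset V := Finset.univ.erase v with hSdef
      have hSa : S.attach.Nonempty := hS.attach
      set φ : (S → ℝ) → ℝ :=
        S.attach.sup' hSa (fun i => fun g : S → ℝ => g i - dist u i.1 + dist u v) with hφ
      have hφmeas : Measurable φ :=
        Finset.measurable_sup' hSa fun i _ =>
          ((measurable_pi_apply i).sub measurable_const).add measurable_const
      set T : Ω → ℝ := fun ω => φ (fun i : S => r i ω) with hT
      have hTmeas : Measurable T :=
        hφmeas.comp (measurable_pi_lambda _ fun i => hmeas i)
      -- independence of T and r v
      have hdisjS : Disjoint S ({v} : Finset V) :=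
        Finset.disjoint_singleton_right.mpr (Finset.notMem_erase v _)
      have hind0 := hindep.indepFun_finset S {v} hdisjS hmeas
      have hindTX : IndepFun T (r v) μ := by
        have := hind0.comp hφmeas
          (measurable_pi_apply (⟨v, Finset.mem_singleton_self v⟩ : ({v} : Finset V)))
        exact this
      -- rewrite A v and B v via T
      have hTval : ∀ ω s, (T ω + s < r v ω ↔
          ∀ w, w ≠ v → r w ω - dist u w + s < r v ω - dist u v) := by
        intro ω s
        have : T ω = S.attach.sup' hSa (fun i => r i ω - dist u i.1 + dist u v) := by
          simp only [hT, hφ, Finset.sup'_apply]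
        rw [this]
        constructor
        · intro h w hw
          have hmem : w ∈ S := Finset.mem_erase.mpr ⟨hw, Finset.mem_univ w⟩
          have hle : r w ω - dist u w + dist u v
              ≤ S.attach.sup' hSa (fun i => r i ω - dist u i.1 + dist u v) :=
            Finset.le_sup' (fun i : S => r i.1 ω - dist u i.1 + dist u v)
              (Finset.mem_attach _ ⟨w, hmem⟩)
          linarith
        · intro h
          have : ∀ i ∈ S.attach, r i.1 ω - dist u i.1 + dist u v < r v ω - s := by
            intro i _
            have hi : i.1 ≠ v := (Finset.mem_erase.mp i.2).1
            have := h i.1 hi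
            linarith
          have := (Finset.sup'_lt_iff hSa).mpr this
          linarith
      have hAeq : A v = {ω | T ω + 2 * ρ < r v ω} := by
        ext ω; simpa [hA] using (hTval ω (2 * ρ)).symm
      have hBeq : B v = {ω | T ω + 0 < r v ω} := by
        ext ω
        simp only [hB, Set.mem_setOf_eq]
        rw [hTval ω 0]
        constructor
        · intro h w hw; have := h w hw; linarith
        · intro h w hw; have := h w hw; linarith
      rw [hAeq, hBeq,
        measure_shift_lt μ hα (hmeas v) hTmeas hindTX (hdist v) (2 * ρ),
        measure_shift_lt μ hα (hmeas v) hTmeas hindTX (hdist v) 0]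
      rw [← lintegral_const_mul' c _ ENNReal.ofReal_ne_top]
      refine lintegral_mono fun t => ?_
      rw [hc, ← ENNReal.ofReal_mul (Real.exp_nonneg _), ← Real.exp_add]
      refine ENNReal.ofReal_le_ofReal (Real.exp_le_exp.mpr ?_)
      have h1 : max (t + 2 * ρ) 0 ≤ max (t + 0) 0 + 2 * ρ := by
        refine max_le ?_ ?_
        · have := le_max_left (t + 0) 0; linarith
        · have := le_max_right (t + 0) 0; linarith
      nlinarith [mul_le_mul_of_nonneg_left h1 hα.le]
    · -- no other vertex: A v = univ
      have hAuniv : A v = Set.univ := by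
        ext ω
        simp only [hA, Set.mem_setOf_eq, Set.mem_univ, iff_true]
        intro w hw
        exact absurd (Finset.not_nonempty_iff_eq_empty.mp hS ▸
          Finset.mem_erase.mpr ⟨hw, Finset.mem_univ w⟩) (Finset.notMem_empty w)
      have hc1 : c ≤ 1 := by
        rw [hc, ← ENNReal.ofReal_one]
        exact ENNReal.ofReal_le_ofReal (Real.exp_le_one_iff.mpr (by nlinarith))
      calc c * μ (B v) ≤ 1 * 1 := mul_le_mul' hc1 prob_le_one
        _ = μ (A v) := by rw [hAuniv, measure_univ, one_mul]
  -- ties are null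
  have htie : ∀ v w : V, v ≠ w →
      μ {ω | r v ω - dist u v = r w ω - dist u w} = 0 := by
    intro v w hvw
    have hind : IndepFun (r w) (r v) μ := hindep.indepFun (Ne.symm hvw)
    have := measure_eq_shift_zero μ hα (hmeas v) (hmeas w) hind (hdist v)
      (dist u v - dist u w)
    have heq : {ω | r v ω - dist u v = r w ω - dist u w}
        = {ω | r v ω = r w ω + (dist u v - dist u w)} := by
      ext ω; constructor <;> (intro h; simp only [Set.mem_setOf_eq] at *; linarith)
    rw [heq]
    exact this
  -- the union of the B v has full measure
  have hBfull : (1 : ℝ≥0∞) ≤ ∑ v : V, μ (B v) := by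
    set Tie : Set Ω := ⋃ (p : V × V), ⋃ (_ : p.1 ≠ p.2),
      {ω | r p.1 ω - dist u p.1 = r p.2 ω - dist u p.2} with hTie
    have hTie0 : μ Tie = 0 :=
      measure_iUnion_null fun p => measure_iUnion_null fun hp => htie p.1 p.2 hp
    have hcover : Set.univ ⊆ (⋃ v, B v) ∪ Tie := by
      intro ω _
      by_cases hω : ω ∈ Tie
      · exact Or.inr hω
      · left
        obtain ⟨v, -, hv⟩ := Finset.exists_max_image Finset.univ
          (fun w => r w ω - dist u w) ⟨u, Finset.mem_univ u⟩
        refine Set.mem_iUnion.mpr ⟨v, fun w hw => ?_⟩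
        have hle := hv w (Finset.mem_univ w)
        rcases lt_or_eq_of_le hle with h | h
        · exact h
        · exact absurd (Set.mem_iUnion.mpr ⟨(w, v), Set.mem_iUnion.mpr ⟨hw, h⟩⟩) hω
    have h1 : (1 : ℝ≥0∞) = μ Set.univ := (measure_univ).symm
    calc (1 : ℝ≥0∞) = μ Set.univ := h1
      _ ≤ μ ((⋃ v, B v) ∪ Tie) := measure_mono hcover
      _ ≤ μ (⋃ v, B v) + μ Tie := measure_union_le _ _
      _ = μ (⋃ v, B v) := by rw [hTie0, add_zero]
      _ = ∑' v, μ (B v) := measure_iUnion hBdisj hBmeas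
      _ = ∑ v : V, μ (B v) := tsum_fintype _
  -- the union of the A v is inside the target event
  have hsub : (⋃ v, A v) ⊆ {ω | ∃ vstar : V, ∀ x : V, dist u x ≤ ρ →
      ∀ v : V, v ≠ vstar → dist x vstar - r vstar ω < dist x v - r v ω} := by
    intro ω hω
    obtain ⟨v, hv⟩ := Set.mem_iUnion.mp hω
    refine ⟨v, fun x hx w hw => ?_⟩
    have h0 := hv w hw
    have h1 : dist x v ≤ dist x u + dist u v := dist_triangle _ _ _
    have h2 : dist u w ≤ dist u x + dist x w := dist_triangle _ _ _
    have h3 : dist x u = dist u x := dist_comm _ _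
    linarith
  calc c = c * 1 := (mul_one c).symm
    _ ≤ c * ∑ v : V, μ (B v) := mul_le_mul_right hBfull c
    _ = ∑ v : V, c * μ (B v) := Finset.mul_sum _ _ _
    _ ≤ ∑ v : V, μ (A v) := Finset.sum_le_sum fun v _ => hkey v
    _ = ∑' v, μ (A v) := (tsum_fintype _).symm
    _ = μ (⋃ v, A v) := (measure_iUnion hAdisj hAmeas).symm
    _ ≤ _ := measure_mono hsub
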